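/- For every topological space X, every n ∈ ℕ, and every homology class α ∈ H_n(X;ℝ), the ℓ¹-semi-norm of α equals the normalised ℓ¹-semi-norm of α: inf{‖c‖₁ : c a singular cycle representing α} = inf{‖c‖₁ : c a normalised singular cycle representing α}. -/

import Mathlib

open Finset

noncomputable section SingularChains

/-- The affine map `Δ^k → Δ^n` extending the vertex map `π`. -/
def affMap {k n : ℕ} (π : Fin (k + 1) → Fin (n + 1)) :
    C(stdSimplex ℝ (Fin (k + 1)), stdSimplex ℝ (Fin (n + 1))) where
  toFun x := ⟨fun i => ∑ l ∈ Finset.univ.filter (fun l => π l = i), (x : Fin (k + 1) → ℝ) l, by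
    constructor
    · intro i
      exact Finset.sum_nonneg fun l _ => x.2.1 l
    · rw [← x.2.2]
      exact Finset.sum_fiberwise _ _ _⟩
  continuous_toFun := by
    apply Continuous.subtype_mk
    exact continuous_pi fun i =>
      continuous_finset_sum _ fun l _ => (continuous_apply l).comp continuous_subtype_val

variable {X : Type} [TopologicalSpace X]

/-- Singular `n`-simplices in `X`. -/
abbrev Sing (n : ℕ) (X : Type) [TopologicalSpace X] := C(stdSimplex ℝ (Fin (n + 1)), X)

/-- Singular `n`-chains with real coefficients. -/
abbrev Chain (n : ℕ) (X : Type) [TopologicalSpace X] := Sing n X →₀ ℝ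

/-- The `j`-th face map `∂ⱼ : C_{n+1}(X;ℝ) → C_n(X;ℝ)`. -/
def face {n : ℕ} (j : Fin (n + 2)) : Chain (n + 1) X →ₗ[ℝ] Chain n X :=
  Finsupp.lmapDomain ℝ ℝ fun σ => σ.comp (affMap (Fin.succAbove j))

/-- The singular boundary operator `∂ = Σⱼ (-1)ʲ ∂ⱼ`. -/
def bdry (n : ℕ) : Chain (n + 1) X →ₗ[ℝ] Chain n X :=
  ∑ j : Fin (n + 2), ((-1 : ℝ) ^ (j : ℕ)) • face j

/-- The symmetrisation of a singular simplex. -/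
def symSimplex {n : ℕ} (σ : Sing n X) : Chain n X :=
  (((n + 1).factorial : ℝ))⁻¹ •
    ∑ π : Equiv.Perm (Fin (n + 1)),
      ((Equiv.Perm.sign π : ℤ) : ℝ) • Finsupp.single (σ.comp (affMap π)) (1 : ℝ)

/-- The symmetrisation map `sym_n : C_n(X;ℝ) → C_n(X;ℝ)`. -/
def symCh (n : ℕ) : Chain n X →ₗ[ℝ] Chain n X :=
  Finsupp.lsum ℝ fun σ => LinearMap.toSpanSingleton ℝ _ (symSimplex σ)

/-- The ℓ¹-norm of a singular chain. -/
def l1 {n : ℕ} (c : Chain n X) : ℝ := ∑ σ ∈ c.support, |c σ|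

/-- Cycles. -/
def cyc (X : Type) [TopologicalSpace X] : (n : ℕ) → Submodule ℝ (Chain n X)
  | 0 => ⊤
  | n + 1 => LinearMap.ker (bdry n)

/-- Boundaries. -/
def bdries (X : Type) [TopologicalSpace X] (n : ℕ) : Submodule ℝ (Chain n X) :=
  LinearMap.range (bdry n)

/-- A chain is normalised if all but the last face map vanish on it. -/
def IsNormalised : {n : ℕ} → Chain n X → Prop
  | 0, _ => True
  | n + 1, c => ∀ j : Fin (n + 2), j ≠ Fin.last (n + 1) → face j c = 0

/-- The cyclic permutation `τⱼ = (j j-1 ⋯ 1 0)`. -/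
def tau (n : ℕ) (j : Fin (n + 1)) : Equiv.Perm (Fin (n + 1)) := (Fin.cycleRange j)⁻¹

end SingularChains
noncomputable section NormalisationProof

open Equiv Equiv.Perm Finsupp

variable {V W : Type}

/-- Combinatorial (abstract simplicial) chains with vertex type `V`. -/
abbrev ACh (k : ℕ) (V : Type) := (Fin (k + 1) → V) →₀ ℝ

def pushA {k : ℕ} (g : V → W) : ACh k V →ₗ[ℝ] ACh k W :=
  Finsupp.lmapDomain ℝ ℝ (fun f => g ∘ f)

def faceA {k : ℕ} (j : Fin (k + 2)) : ACh (k + 1) V →ₗ[ℝ] ACh k V :=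
  Finsupp.lmapDomain ℝ ℝ (fun f => f ∘ Fin.succAbove j)

def bdryA (k : ℕ) : ACh (k + 1) V →ₗ[ℝ] ACh k V :=
  ∑ j : Fin (k + 2), ((-1 : ℝ) ^ (j : ℕ)) • faceA j

def lamA {m : ℕ} (N : ℕ) : ACh m (Fin (N + 1)) →ₗ[ℝ] ACh m (Fin (N + 2)) :=
  ∑ j : Fin (N + 2), ((-1 : ℝ) ^ (j : ℕ)) • pushA (Fin.succAbove j)

def symA (k : ℕ) : ACh k V →ₗ[ℝ] ACh k V :=
  (((k + 1).factorial : ℝ))⁻¹ •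
    ∑ π : Equiv.Perm (Fin (k + 1)),
      ((Equiv.Perm.sign π : ℤ) : ℝ) • Finsupp.lmapDomain ℝ ℝ (fun f => f ∘ π)

def coneA {k : ℕ} (v : V) : ACh k V →ₗ[ℝ] ACh (k + 1) V :=
  Finsupp.lmapDomain ℝ ℝ (fun f => Fin.cons v f)

@[simp] lemma pushA_single {k : ℕ} (g : V → W) (f : Fin (k + 1) → V) (a : ℝ) :
    pushA g (Finsupp.single f a) = Finsupp.single (g ∘ f) a := by
  simp [pushA]

@[simp] lemma faceA_single {k : ℕ} (j : Fin (k + 2)) (f : Fin (k + 2) → V) (a : ℝ) :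
    faceA j (Finsupp.single f a) = Finsupp.single (f ∘ Fin.succAbove j) a := by
  simp [faceA]

lemma bdryA_single {k : ℕ} (f : Fin (k + 2) → V) (a : ℝ) :
    bdryA k (Finsupp.single f a) =
      ∑ j : Fin (k + 2), ((-1 : ℝ) ^ (j : ℕ)) • Finsupp.single (f ∘ Fin.succAbove j) a := by
  simp [bdryA, LinearMap.sum_apply]

lemma lamA_apply {m N : ℕ} (c : ACh m (Fin (N + 1))) :
    lamA N c = ∑ j : Fin (N + 2), ((-1 : ℝ) ^ (j : ℕ)) • pushA (Fin.succAbove j) c := by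
  simp [lamA, LinearMap.sum_apply]

lemma symA_single {k : ℕ} (f : Fin (k + 1) → V) (a : ℝ) :
    symA k (Finsupp.single f a) =
      (((k + 1).factorial : ℝ))⁻¹ •
        ∑ π : Equiv.Perm (Fin (k + 1)),
          ((Equiv.Perm.sign π : ℤ) : ℝ) • Finsupp.single (f ∘ π) a := by
  simp [symA, LinearMap.sum_apply]

@[simp] lemma coneA_single {k : ℕ} (v : V) (f : Fin (k + 1) → V) (a : ℝ) :
    coneA v (Finsupp.single f a) = Finsupp.single (Fin.cons v f) a := by
  simp [coneA]

lemma symA_pushA {k : ℕ} (g : V → W) (c : ACh k V) :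
    symA k (pushA g c) = pushA g (symA k c) := by
  induction c using Finsupp.induction_linear with
  | zero => simp
  | add f g hf hg => simp [map_add, hf, hg]
  | single f a =>
    simp only [pushA_single, symA_single, Finset.smul_sum, map_smul, map_sum, pushA_single]
    rfl

lemma symA_zero_deg (c : ACh 0 V) : symA 0 c = c := by
  induction c using Finsupp.induction_linear with
  | zero => simp
  | add f g hf hg => simp [map_add, hf, hg]
  | single f a =>
    rw [symA_single]
    rw [Finset.sum_eq_single (1 : Equiv.Perm (Fin 1))]
    · simp
    · intro b _ hb
      exact absurd (Subsingleton.elim b 1) hb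
    · simp

end NormalisationProof
noncomputable section CruxProof

open Equiv Equiv.Perm Finsupp

variable {V W : Type}

lemma tau_zero {n : ℕ} (t : Fin (n + 1)) : tau n t 0 = t := by
  simp [tau, Equiv.Perm.inv_def]

lemma tau_succ {n : ℕ} (t : Fin (n + 1)) (x : Fin n) :
    tau n t x.succ = Fin.succAbove t x := by
  simp [tau, Equiv.Perm.inv_def]

lemma tau_inv_succAbove {n : ℕ} (t : Fin (n + 1)) (x : Fin n) :
    (tau n t)⁻¹ (Fin.succAbove t x) = x.succ := by
  simp [tau, Equiv.Perm.inv_def]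

lemma sign_tau {n : ℕ} (t : Fin (n + 1)) :
    Equiv.Perm.sign (tau n t) = (-1) ^ (t : ℕ) := by
  simp [tau, Fin.sign_cycleRange]

/-- extension of a permutation of `Fin (k+1)` to `Fin (k+2)` fixing `0`. -/
def extP {k : ℕ} (ρ : Equiv.Perm (Fin (k + 1))) : Equiv.Perm (Fin (k + 2)) :=
  Equiv.Perm.decomposeFin.symm (0, ρ)

@[simp] lemma extP_zero {k : ℕ} (ρ : Equiv.Perm (Fin (k + 1))) : extP ρ 0 = 0 :=
  Equiv.Perm.decomposeFin_symm_apply_zero 0 ρ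

@[simp] lemma extP_succ {k : ℕ} (ρ : Equiv.Perm (Fin (k + 1))) (x : Fin (k + 1)) :
    extP ρ x.succ = (ρ x).succ := by
  simp [extP, Equiv.Perm.decomposeFin_symm_apply_succ]

@[simp] lemma sign_extP {k : ℕ} (ρ : Equiv.Perm (Fin (k + 1))) :
    Equiv.Perm.sign (extP ρ) = Equiv.Perm.sign ρ := by
  simp [extP, Equiv.Perm.decomposeFin.symm_sign]

lemma extP_of_fix_zero {k : ℕ} (σ : Equiv.Perm (Fin (k + 2))) (h : σ 0 = 0) :
    extP (Equiv.Perm.decomposeFin σ).2 = σ := by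
  have h1 : Equiv.Perm.decomposeFin.symm (Equiv.Perm.decomposeFin σ) = σ :=
    Equiv.symm_apply_apply _ _
  have h2 : (Equiv.Perm.decomposeFin σ).1 = 0 := by
    have h3 : Equiv.Perm.decomposeFin.symm
        ((Equiv.Perm.decomposeFin σ).1, (Equiv.Perm.decomposeFin σ).2) = σ := by
      rwa [Prod.mk.eta]
    have h4 := congrArg (fun τ : Equiv.Perm (Fin (k + 2)) => τ 0) h3
    simp only [Equiv.Perm.decomposeFin_symm_apply_zero] at h4
    exact h4.trans h
  rw [extP, ← h2, Prod.mk.eta, h1]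

/-- Decomposition of a permutation of `Fin (k+2)` by where it sends `j` and the
induced permutation of the complement. -/
def insEquiv (k : ℕ) (j : Fin (k + 2)) :
    Fin (k + 2) × Equiv.Perm (Fin (k + 1)) ≃ Equiv.Perm (Fin (k + 2)) where
  toFun mρ := tau (k + 1) mρ.1 * extP mρ.2 * (tau (k + 1) j)⁻¹
  invFun π := (π j,
    (Equiv.Perm.decomposeFin ((tau (k + 1) (π j))⁻¹ * π * tau (k + 1) j)).2)
  left_inv := by
    rintro ⟨m, ρ⟩
    dsimp only
    have hj : (tau (k + 1) m * extP ρ * (tau (k + 1) j)⁻¹) j = m := by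
      have h1 : (tau (k + 1) j)⁻¹ j = 0 := by
        rw [Equiv.Perm.inv_def, Equiv.symm_apply_eq, tau_zero]
      simp [Equiv.Perm.mul_apply, h1, tau_zero]
    rw [hj]
    have h2 : (tau (k + 1) m)⁻¹ * (tau (k + 1) m * extP ρ * (tau (k + 1) j)⁻¹) *
        tau (k + 1) j = extP ρ := by group
    rw [h2, extP, Equiv.apply_symm_apply]
  right_inv := by
    intro π
    dsimp only
    have h0 : ((tau (k + 1) (π j))⁻¹ * π * tau (k + 1) j) 0 = 0 := by
      have h1 : tau (k + 1) j 0 = j := tau_zero j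
      have h2 : (tau (k + 1) (π j))⁻¹ (π j) = 0 := by
        rw [Equiv.Perm.inv_def, Equiv.symm_apply_eq, tau_zero]
      simp [Equiv.Perm.mul_apply, h1, h2]
    rw [extP_of_fix_zero _ h0]
    group

lemma insEquiv_comp_succAbove {k : ℕ} (j m : Fin (k + 2)) (ρ : Equiv.Perm (Fin (k + 1)))
    (i : Fin (k + 1)) :
    insEquiv k j (m, ρ) (Fin.succAbove j i) = Fin.succAbove m (ρ i) := by
  show (tau (k + 1) m * extP ρ * (tau (k + 1) j)⁻¹) _ = _
  rw [Equiv.Perm.mul_apply, Equiv.Perm.mul_apply, tau_inv_succAbove, extP_succ, tau_succ]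

lemma sign_insEquiv {k : ℕ} (j m : Fin (k + 2)) (ρ : Equiv.Perm (Fin (k + 1))) :
    Equiv.Perm.sign (insEquiv k j (m, ρ)) =
      (-1) ^ (m : ℕ) * (-1) ^ (j : ℕ) * Equiv.Perm.sign ρ := by
  show Equiv.Perm.sign (tau (k + 1) m * extP ρ * (tau (k + 1) j)⁻¹) = _
  have hinv : ((-1 : ℤˣ)) ⁻¹ = -1 := inv_eq_of_mul_eq_one_right (Int.units_mul_self _)
  rw [map_mul, map_mul, map_inv, sign_tau, sign_tau, sign_extP, ← inv_pow, hinv, mul_right_comm]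

end CruxProof
noncomputable section CombIdentities

open Equiv Equiv.Perm Finsupp

variable {V W : Type}

lemma insEquiv_comp {k : ℕ} (j m : Fin (k + 2)) (ρ : Equiv.Perm (Fin (k + 1)))
    (f : Fin (k + 2) → V) :
    (f ∘ ⇑(insEquiv k j (m, ρ))) ∘ Fin.succAbove j = (f ∘ Fin.succAbove m) ∘ ⇑ρ := by
  funext i
  simp only [Function.comp_apply]
  rw [insEquiv_comp_succAbove]

lemma sign_insEquiv_real {k : ℕ} (j m : Fin (k + 2)) (ρ : Equiv.Perm (Fin (k + 1))) :
    ((Equiv.Perm.sign (insEquiv k j (m, ρ)) : ℤ) : ℝ) =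
      (-1 : ℝ) ^ (m : ℕ) * (-1) ^ (j : ℕ) * ((Equiv.Perm.sign ρ : ℤ) : ℝ) := by
  rw [sign_insEquiv]
  push_cast
  ring

theorem faceA_symA {k : ℕ} (j : Fin (k + 2)) (c : ACh (k + 1) V) :
    faceA j (symA (k + 1) c) =
      ((-1 : ℝ) ^ (j : ℕ) * ((k : ℝ) + 2)⁻¹) • symA k (bdryA k c) := by
  induction c using Finsupp.induction_linear with
  | zero => simp
  | add f g hf hg => simp [map_add, hf, hg, smul_add]
  | single f a =>
    have hfact : ((k + 2).factorial : ℝ) = ((k : ℝ) + 2) * ((k + 1).factorial : ℝ) := by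
      rw [Nat.factorial_succ]
      push_cast
      ring
    rw [symA_single, map_smul, map_sum]
    simp only [map_smul, faceA_single]
    rw [← Equiv.sum_comp (insEquiv k j)
      (fun π => ((Equiv.Perm.sign π : ℤ) : ℝ) • Finsupp.single ((f ∘ ⇑π) ∘ Fin.succAbove j) a)]
    rw [bdryA_single, map_sum]
    simp only [map_smul, symA_single]
    rw [Fintype.sum_prod_type]
    simp only [insEquiv_comp, sign_insEquiv_real, Finset.smul_sum, smul_smul]
    refine Finset.sum_congr rfl fun m _ => Finset.sum_congr rfl fun ρ _ => ?_
    congr 1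
    rw [hfact]
    have h2 : ((k : ℝ) + 2) ≠ 0 := by positivity
    have h3 : (((k + 1).factorial : ℕ) : ℝ) ≠ 0 :=
      Nat.cast_ne_zero.mpr (Nat.factorial_ne_zero _)
    field_simp

theorem bdryA_symA {k : ℕ} (c : ACh (k + 1) V) :
    bdryA k (symA (k + 1) c) = symA k (bdryA k c) := by
  have h1 : bdryA k (symA (k + 1) c) =
      ∑ j : Fin (k + 2), ((-1 : ℝ) ^ (j : ℕ)) • faceA j (symA (k + 1) c) := by
    simp [bdryA, LinearMap.sum_apply]
  rw [h1]
  simp only [faceA_symA, smul_smul]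
  rw [← Finset.sum_smul]
  have h2 : ∑ j : Fin (k + 2), (-1 : ℝ) ^ (j : ℕ) * ((-1) ^ (j : ℕ) * ((k : ℝ) + 2)⁻¹) =
      1 := by
    have h3 : ∀ j : Fin (k + 2),
        (-1 : ℝ) ^ (j : ℕ) * ((-1) ^ (j : ℕ) * ((k : ℝ) + 2)⁻¹) = ((k : ℝ) + 2)⁻¹ := by
      intro j
      have h4 : (-1 : ℝ) ^ (j : ℕ) * (-1) ^ (j : ℕ) = 1 := by
        rw [← pow_add]
        exact Even.neg_one_pow ⟨(j : ℕ), rfl⟩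
      rw [← mul_assoc, h4, one_mul]
    rw [Finset.sum_congr rfl fun j _ => h3 j, Finset.sum_const, Finset.card_univ,
      Fintype.card_fin, nsmul_eq_mul]
    push_cast
    rw [mul_inv_cancel₀ (by positivity)]
  rw [h2, one_smul]

lemma val_succAbove' {n : ℕ} (p : Fin (n + 1)) (t : Fin n) :
    ((p.succAbove t : Fin (n + 1)) : ℕ) =
      if (t : ℕ) < (p : ℕ) then (t : ℕ) else (t : ℕ) + 1 := by
  rcases Nat.lt_or_ge (t : ℕ) (p : ℕ) with h | h
  · rw [Fin.succAbove_of_castSucc_lt _ _ (by rwa [Fin.lt_def, Fin.coe_castSucc])]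
    simp [h]
  · rw [Fin.succAbove_of_le_castSucc _ _ (by rwa [Fin.le_def, Fin.coe_castSucc])]
    simp [Nat.not_lt.mpr h]

/-- The involution used to prove `Λ ∘ Λ = 0`. -/
def flipP {N : ℕ} (p : Fin (N + 3) × Fin (N + 2)) : Fin (N + 3) × Fin (N + 2) :=
  if h : (p.1 : ℕ) ≤ (p.2 : ℕ) then (p.2.succ, ⟨(p.1 : ℕ), by omega⟩)
  else (⟨(p.2 : ℕ), by omega⟩, ⟨(p.1 : ℕ) - 1, by have := p.1.isLt; omega⟩)

lemma flipP_of_le {N : ℕ} {p : Fin (N + 3) × Fin (N + 2)} (h : (p.1 : ℕ) ≤ (p.2 : ℕ)) :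
    flipP p = (p.2.succ, ⟨(p.1 : ℕ), by omega⟩) := dif_pos h

lemma flipP_of_gt {N : ℕ} {p : Fin (N + 3) × Fin (N + 2)} (h : ¬ (p.1 : ℕ) ≤ (p.2 : ℕ)) :
    flipP p = (⟨(p.2 : ℕ), by omega⟩, ⟨(p.1 : ℕ) - 1, by have := p.1.isLt; omega⟩) :=
  dif_neg h

lemma flipP_flipP {N : ℕ} (p : Fin (N + 3) × Fin (N + 2)) : flipP (flipP p) = p := by
  rcases p with ⟨a, b⟩
  by_cases h : (a : ℕ) ≤ (b : ℕ)
  · rw [flipP_of_le (p := (a, b)) h]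
    rw [flipP_of_gt (by simp [Fin.val_succ]; omega)]
    refine Prod.ext ?_ ?_ <;> (apply Fin.ext; simp [Fin.val_succ])
  · rw [flipP_of_gt (p := (a, b)) h]
    rw [flipP_of_le (by simp; omega)]
    refine Prod.ext ?_ ?_ <;> (apply Fin.ext; simp [Fin.val_succ]) <;> omega

lemma flipP_comp {N : ℕ} (p : Fin (N + 3) × Fin (N + 2)) (hp : (p.1 : ℕ) ≤ (p.2 : ℕ)) :
    Fin.succAbove (flipP p).1 ∘ Fin.succAbove (flipP p).2 =
      Fin.succAbove p.1 ∘ Fin.succAbove p.2 := by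
  rcases p with ⟨a, b⟩
  rw [flipP_of_le hp]
  funext i
  simp only [Function.comp_apply]
  apply Fin.ext
  rw [val_succAbove', val_succAbove', val_succAbove', val_succAbove']
  simp only [Fin.val_succ]
  simp only at hp
  split_ifs <;> simp_all <;> omega

lemma flipP_sign {N : ℕ} (p : Fin (N + 3) × Fin (N + 2)) (hp : (p.1 : ℕ) ≤ (p.2 : ℕ)) :
    ((-1 : ℝ) ^ (((flipP p).2 : ℕ)) * (-1) ^ (((flipP p).1 : ℕ))) =
      -((-1 : ℝ) ^ ((p.2 : ℕ)) * (-1) ^ ((p.1 : ℕ))) := by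
  rcases p with ⟨a, b⟩
  rw [flipP_of_le hp]
  simp only [Fin.val_succ]
  rw [pow_succ]
  ring

theorem lamA_lamA {m N : ℕ} (c : ACh m (Fin (N + 1))) :
    lamA (N + 1) (lamA N c) = 0 := by
  induction c using Finsupp.induction_linear with
  | zero => simp
  | add f g hf hg => simp [map_add, hf, hg]
  | single f a =>
    have key : ∑ p : Fin (N + 3) × Fin (N + 2),
        ((-1 : ℝ) ^ ((p.2 : ℕ)) * (-1) ^ ((p.1 : ℕ))) •
          (Finsupp.single (Fin.succAbove p.1 ∘ (Fin.succAbove p.2 ∘ f)) a) = 0 := by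
      apply Finset.sum_involution (fun p _ => flipP p)
      · intro p _
        by_cases hp : (p.1 : ℕ) ≤ (p.2 : ℕ)
        · have h1 := flipP_comp p hp
          have h2 := flipP_sign p hp
          have h3 : Fin.succAbove (flipP p).1 ∘ (Fin.succAbove (flipP p).2 ∘ f) =
              Fin.succAbove p.1 ∘ (Fin.succAbove p.2 ∘ f) :=
            by rw [← Function.comp_assoc, h1, Function.comp_assoc]
          rw [h3, h2, neg_smul, add_neg_cancel]
        · have hq : ((flipP p).1 : ℕ) ≤ ((flipP p).2 : ℕ) := by
            rcases p with ⟨a', b'⟩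
            rw [flipP_of_gt hp]
            simp only at hp ⊢
            omega
          have h1 := flipP_comp (flipP p) hq
          have h2 := flipP_sign (flipP p) hq
          rw [flipP_flipP] at h1 h2
          have h3 : Fin.succAbove p.1 ∘ (Fin.succAbove p.2 ∘ f) =
              Fin.succAbove (flipP p).1 ∘ (Fin.succAbove (flipP p).2 ∘ f) :=
            by rw [← Function.comp_assoc, h1, Function.comp_assoc]
          rw [h3, h2, neg_smul, neg_add_cancel]
      · intro p _ _
        rcases p with ⟨a', b'⟩
        by_cases hp : (a' : ℕ) ≤ (b' : ℕ)
        · intro heq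
          have h5 := congrArg (fun q => (q.1 : ℕ)) heq
          rw [flipP_of_le hp] at h5
          simp [Fin.val_succ] at h5
          omega
        · intro heq
          have h5 := congrArg (fun q => (q.1 : ℕ)) heq
          rw [flipP_of_gt hp] at h5
          simp at h5
          omega
      · intro p _
        exact Finset.mem_univ _
      · intro p _
        exact flipP_flipP p
    rw [Fintype.sum_prod_type, Finset.sum_comm] at key
    simp only [lamA_apply, map_sum, map_smul, pushA_single, Finset.smul_sum, smul_smul]
    exact key

end CombIdentities
noncomputable section HomotopyComb

open Finsupp

variable {V W : Type}

lemma cons_comp_succAbove_succ {k : ℕ} (v : V) (f : Fin (k + 2) → V) (j : Fin (k + 2)) :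
    Fin.cons v f ∘ Fin.succAbove j.succ = Fin.cons v (f ∘ Fin.succAbove j) := by
  funext i
  induction i using Fin.cases with
  | zero =>
    have h0 : Fin.succAbove j.succ (0 : Fin (k + 2)) = 0 := by
      apply Fin.ext
      rw [val_succAbove']
      simp [Fin.val_succ]
    simp [Function.comp_apply, h0]
  | succ i =>
    have h1 : Fin.succAbove j.succ i.succ = (Fin.succAbove j i).succ :=
      Fin.succ_succAbove_succ j i
    simp [Function.comp_apply, h1]

theorem bdryA_coneA {k : ℕ} (v : V) (c : ACh (k + 1) V) :
    bdryA (k + 1) (coneA v c) = c - coneA v (bdryA k c) := by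
  induction c using Finsupp.induction_linear with
  | zero => simp
  | add f g hf hg => simp only [map_add, hf, hg]; abel
  | single f a =>
    rw [coneA_single, bdryA_single, Fin.sum_univ_succ]
    have h0 : Fin.cons v f ∘ Fin.succAbove (0 : Fin (k + 3)) = f := by
      funext i
      simp [Fin.succAbove_zero, Function.comp_apply]
    rw [h0]
    simp only [Fin.val_zero, pow_zero, one_smul]
    have hj : ∀ j : Fin (k + 2),
        ((-1 : ℝ) ^ ((j.succ : Fin (k + 3)) : ℕ)) •
            Finsupp.single (Fin.cons v f ∘ Fin.succAbove j.succ) a =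
          -(((-1 : ℝ) ^ (j : ℕ)) • Finsupp.single (Fin.cons v (f ∘ Fin.succAbove j)) a) := by
      intro j
      rw [cons_comp_succAbove_succ, Fin.val_succ, pow_succ, mul_neg_one, neg_smul]
    rw [Finset.sum_congr rfl fun j _ => hj j, Finset.sum_neg_distrib]
    rw [bdryA_single, map_sum]
    simp only [map_smul, coneA_single]
    rw [sub_eq_add_neg]

lemma pushA_faceA {k : ℕ} (g : V → W) (j : Fin (k + 2)) (c : ACh (k + 1) V) :
    faceA j (pushA g c) = pushA g (faceA j c) := by
  induction c using Finsupp.induction_linear with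
  | zero => simp
  | add f g' hf hg => simp only [map_add, hf, hg]
  | single f a =>
    rw [pushA_single, faceA_single, faceA_single, pushA_single, Function.comp_assoc]

lemma pushA_bdryA {k : ℕ} (g : V → W) (c : ACh (k + 1) V) :
    bdryA k (pushA g c) = pushA g (bdryA k c) := by
  have h1 : ∀ (d : ACh (k + 1) W), bdryA k d =
      ∑ j : Fin (k + 2), ((-1 : ℝ) ^ (j : ℕ)) • faceA j d := by
    intro d; simp [bdryA, LinearMap.sum_apply]
  have h2 : ∀ (d : ACh (k + 1) V), bdryA k d =
      ∑ j : Fin (k + 2), ((-1 : ℝ) ^ (j : ℕ)) • faceA j d := by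
    intro d; simp [bdryA, LinearMap.sum_apply]
  rw [h1, h2, map_sum]
  simp only [map_smul, pushA_faceA]

lemma lamA_bdryA {m N : ℕ} (c : ACh (m + 1) (Fin (N + 1))) :
    bdryA m (lamA N c) = lamA N (bdryA m c) := by
  simp only [lamA_apply, map_sum, map_smul, pushA_bdryA]

lemma lamA_symA {m N : ℕ} (c : ACh m (Fin (N + 1))) :
    symA m (lamA N c) = lamA N (symA m c) := by
  simp only [lamA_apply, map_sum, map_smul, symA_pushA]

/-- The chain `sym(ι) - ι` on the model simplex. -/
def Sc (k : ℕ) : ACh k (Fin (k + 1)) :=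
  symA k (Finsupp.single id 1) - Finsupp.single id 1

/-- The combinatorial chain homotopy between `sym` and the identity. -/
def Hc : (k : ℕ) → ACh (k + 1) (Fin (k + 1))
  | 0 => 0
  | (k + 1) => coneA 0 (Sc (k + 1) - lamA k (Hc k))

def Dc : (k : ℕ) → ACh k (Fin (k + 1))
  | 0 => 0
  | (k + 1) => lamA k (Hc k)

lemma Sc_zero : Sc 0 = 0 := by rw [Sc, symA_zero_deg, sub_self]

lemma bdryA_single_id (k : ℕ) :
    bdryA k (Finsupp.single (id : Fin (k + 2) → Fin (k + 2)) 1) =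
      lamA k (Finsupp.single (id : Fin (k + 1) → Fin (k + 1)) 1) := by
  rw [bdryA_single, lamA_apply]
  refine Finset.sum_congr rfl fun j _ => ?_
  rw [pushA_single]
  congr 1

lemma bdryA_Sc (k : ℕ) : bdryA k (Sc (k + 1)) = lamA k (Sc k) := by
  rw [Sc, map_sub, bdryA_symA, bdryA_single_id, lamA_symA, Sc, map_sub]

theorem bdryA_Hc (k : ℕ) : bdryA k (Hc k) = Sc k - Dc k := by
  induction k with
  | zero =>
    rw [show Hc 0 = 0 from rfl, map_zero, Sc_zero, show Dc 0 = 0 from rfl, sub_zero]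
  | succ k IH =>
    have hcycle : bdryA k (Sc (k + 1) - lamA k (Hc k)) = 0 := by
      rw [map_sub, bdryA_Sc, lamA_bdryA, IH, map_sub, sub_sub_cancel]
      cases k with
      | zero => rw [show Dc 0 = 0 from rfl, map_zero]
      | succ k' => rw [show Dc (k' + 1) = lamA k' (Hc k') from rfl, lamA_lamA]
    rw [show Hc (k + 1) = coneA 0 (Sc (k + 1) - lamA k (Hc k)) from rfl]
    rw [bdryA_coneA, hcycle, map_zero, sub_zero]
    rw [show Dc (k + 1) = lamA k (Hc k) from rfl]

end HomotopyComb
noncomputable section TopTransfer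

open Finsupp

variable {X : Type} [TopologicalSpace X]

lemma affMap_apply {k n : ℕ} (π : Fin (k + 1) → Fin (n + 1)) (x : stdSimplex ℝ (Fin (k + 1)))
    (i : Fin (n + 1)) :
    ((affMap π x : stdSimplex ℝ (Fin (n + 1))) : Fin (n + 1) → ℝ) i =
      ∑ l ∈ Finset.univ.filter (fun l => π l = i), (x : Fin (k + 1) → ℝ) l := rfl

theorem affMap_comp {a b c : ℕ} (g : Fin (b + 1) → Fin (c + 1)) (f : Fin (a + 1) → Fin (b + 1)) :
    affMap (g ∘ f) = (affMap g).comp (affMap f) := by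
  ext x i
  show ∑ l ∈ Finset.univ.filter (fun l => (g ∘ f) l = i), (x : Fin (a + 1) → ℝ) l
      = ∑ l ∈ Finset.univ.filter (fun l => g l = i),
          ∑ t ∈ Finset.univ.filter (fun t => f t = l), (x : Fin (a + 1) → ℝ) t
  rw [Finset.sum_filter, Finset.sum_filter]
  rw [← Finset.sum_fiberwise Finset.univ f
    (fun t => if (g ∘ f) t = i then (x : Fin (a + 1) → ℝ) t else 0)]
  refine Finset.sum_congr rfl fun l _ => ?_
  split_ifs with h
  · refine Finset.sum_congr rfl fun t ht => ?_
    rw [Finset.mem_filter] at ht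
    rw [if_pos]
    show g (f t) = i
    rw [ht.2, h]
  · apply Finset.sum_eq_zero
    intro t ht
    rw [Finset.mem_filter] at ht
    rw [if_neg]
    intro hc
    exact h (by rw [← ht.2]; exact hc)

theorem affMap_id {k : ℕ} : affMap (id : Fin (k + 1) → Fin (k + 1)) = ContinuousMap.id _ := by
  ext x i
  show ∑ l ∈ Finset.univ.filter (fun l => id l = i), (x : Fin (k + 1) → ℝ) l
      = (x : Fin (k + 1) → ℝ) i
  simp [Finset.filter_eq']

/-- Realisation of a combinatorial chain on the simplex `σ`. -/
def RA {k m : ℕ} (σ : Sing k X) : ACh m (Fin (k + 1)) →ₗ[ℝ] Chain m X :=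
  Finsupp.lmapDomain ℝ ℝ (fun f => σ.comp (affMap f))

@[simp] lemma RA_single {k m : ℕ} (σ : Sing k X) (f : Fin (m + 1) → Fin (k + 1)) (a : ℝ) :
    RA (m := m) σ (Finsupp.single f a) = Finsupp.single (σ.comp (affMap f)) a := by
  simp [RA]

lemma face_RA {k m : ℕ} (σ : Sing k X) (j : Fin (m + 2)) (c : ACh (m + 1) (Fin (k + 1))) :
    face j (RA σ c) = RA σ (faceA j c) := by
  induction c using Finsupp.induction_linear with
  | zero => simp [face]
  | add f g hf hg => simp only [map_add, hf, hg]
  | single f a =>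
    rw [RA_single, faceA_single, RA_single]
    show Finsupp.mapDomain _ _ = _
    rw [Finsupp.mapDomain_single]
    congr 1
    rw [affMap_comp, ContinuousMap.comp_assoc]

lemma bdry_single {k : ℕ} (σ : Sing (k + 1) X) (a : ℝ) :
    bdry k (Finsupp.single σ a) =
      ∑ j : Fin (k + 2), ((-1 : ℝ) ^ (j : ℕ)) •
        Finsupp.single (σ.comp (affMap (Fin.succAbove j))) a := by
  simp [bdry, LinearMap.sum_apply, face]

lemma bdry_RA {k m : ℕ} (σ : Sing k X) (c : ACh (m + 1) (Fin (k + 1))) :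
    bdry m (RA σ c) = RA σ (bdryA m c) := by
  have h1 : bdry m (RA σ c) = ∑ j : Fin (m + 2), ((-1 : ℝ) ^ (j : ℕ)) • face j (RA σ c) := by
    simp [bdry, LinearMap.sum_apply]
  have h2 : bdryA m c = ∑ j : Fin (m + 2), ((-1 : ℝ) ^ (j : ℕ)) • faceA j c := by
    simp [bdryA, LinearMap.sum_apply]
  rw [h1, h2, map_sum]
  simp only [map_smul, face_RA]

lemma RA_pushA {k k' m : ℕ} (σ : Sing k X) (g : Fin (k' + 1) → Fin (k + 1))
    (c : ACh m (Fin (k' + 1))) :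
    RA σ (pushA g c) = RA (σ.comp (affMap g)) c := by
  induction c using Finsupp.induction_linear with
  | zero => simp
  | add f g' hf hg => simp only [map_add, hf, hg]
  | single f a =>
    rw [pushA_single, RA_single, RA_single]
    congr 1
    rw [affMap_comp, ContinuousMap.comp_assoc]

lemma symSimplex_eq {k : ℕ} (σ : Sing k X) :
    symSimplex σ = RA σ (symA k (Finsupp.single id 1)) := by
  rw [symA_single, map_smul, map_sum]
  simp only [map_smul, RA_single]
  rw [symSimplex]
  congr 1

lemma single_eq_RA {k : ℕ} (σ : Sing k X) :
    Finsupp.single σ (1 : ℝ) = RA σ (Finsupp.single id 1) := by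
  rw [RA_single, affMap_id, ContinuousMap.comp_id]

lemma symCh_single {k : ℕ} (σ : Sing k X) (a : ℝ) :
    symCh k (Finsupp.single σ a) = a • symSimplex σ := by
  simp [symCh, Finsupp.lsum_single, LinearMap.toSpanSingleton_apply]

lemma symA_bdryA_id (k : ℕ) :
    symA k (bdryA k (Finsupp.single (id : Fin (k + 2) → Fin (k + 2)) (1 : ℝ))) =
      ∑ m : Fin (k + 2), ((-1 : ℝ) ^ (m : ℕ)) •
        pushA (Fin.succAbove m) (symA k (Finsupp.single id 1)) := by
  rw [bdryA_single_id, lamA_symA, lamA_apply]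

theorem face_symCh {k : ℕ} (j : Fin (k + 2)) (c : Chain (k + 1) X) :
    face j (symCh (k + 1) c) = ((-1 : ℝ) ^ (j : ℕ) * ((k : ℝ) + 2)⁻¹) • symCh k (bdry k c) := by
  induction c using Finsupp.induction_linear with
  | zero => simp [face]
  | add f g hf hg => simp [map_add, hf, hg, smul_add]
  | single σ a =>
    rw [symCh_single, map_smul, symSimplex_eq, face_RA, faceA_symA, map_smul]
    rw [bdry_single, map_sum]
    simp only [map_smul, symCh_single]
    simp only [symSimplex_eq (X := X)]
    simp only [← RA_pushA]
    rw [symA_bdryA_id, map_sum]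
    simp only [map_smul]
    simp only [Finset.smul_sum, smul_smul]
    refine Finset.sum_congr rfl fun m _ => ?_
    congr 1
    ring

/-- The chain homotopy between `sym` and the identity. -/
def hCh (k : ℕ) : Chain k X →ₗ[ℝ] Chain (k + 1) X :=
  Finsupp.lsum ℝ fun σ => LinearMap.toSpanSingleton ℝ _ (RA σ (Hc k))

lemma hCh_single {k : ℕ} (σ : Sing k X) (a : ℝ) :
    hCh k (Finsupp.single σ a) = a • RA σ (Hc k) := by
  simp [hCh, Finsupp.lsum_single, LinearMap.toSpanSingleton_apply]

theorem symCh_homotopy {k : ℕ} (c : Chain (k + 1) X) :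
    symCh (k + 1) c - c = bdry (k + 1) (hCh (k + 1) c) + hCh k (bdry k c) := by
  induction c using Finsupp.induction_linear with
  | zero => simp
  | add f g hf hg =>
    rw [map_add, map_add, map_add, map_add, map_add]
    rw [show symCh (k+1) f + symCh (k+1) g - (f + g) =
      (symCh (k+1) f - f) + (symCh (k+1) g - g) by abel, hf, hg]
    abel
  | single σ a =>
    rw [symCh_single, hCh_single, map_smul, bdry_RA, bdryA_Hc, map_sub]
    rw [bdry_single, map_sum]
    simp only [map_smul, hCh_single]
    have hD : RA σ (Dc (k + 1)) = ∑ m : Fin (k + 2), ((-1 : ℝ) ^ (m : ℕ)) •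
        RA σ (pushA (Fin.succAbove m) (Hc k)) := by
      rw [show Dc (k + 1) = lamA k (Hc k) from rfl, lamA_apply, map_sum]
      simp only [map_smul]
    rw [hD]
    have hS : RA σ (Sc (k + 1)) = symSimplex σ - Finsupp.single σ 1 := by
      rw [Sc, map_sub, ← symSimplex_eq, ← single_eq_RA]
    rw [hS]
    simp only [← RA_pushA]
    have hsingle1 : Finsupp.single σ a = a • Finsupp.single σ (1 : ℝ) := by
      rw [Finsupp.smul_single, smul_eq_mul, mul_one]
    rw [hsingle1]
    have hT : a • ∑ m : Fin (k + 2), ((-1 : ℝ) ^ (m : ℕ)) •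
        RA σ (pushA (Fin.succAbove m) (Hc k)) =
        ∑ m : Fin (k + 2), ((-1 : ℝ) ^ (m : ℕ)) •
          (a • RA σ (pushA (Fin.succAbove m) (Hc k))) := by
      rw [Finset.smul_sum]
      exact Finset.sum_congr rfl fun m _ => smul_comm a _ _
    rw [← hT, smul_sub, smul_sub]
    abel

end TopTransfer
noncomputable section L1Lemmas

open Finsupp

variable {X : Type} [TopologicalSpace X]

lemma l1_nonneg {n : ℕ} (c : Chain n X) : 0 ≤ l1 c :=
  Finset.sum_nonneg fun _ _ => abs_nonneg _

lemma l1_eq_sum_of_subset {n : ℕ} {c : Chain n X} {s : Finset (Sing n X)}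
    (h : c.support ⊆ s) : l1 c = ∑ σ ∈ s, |c σ| :=
  Finset.sum_subset h fun σ _ hσ => by
    rw [Finsupp.notMem_support_iff.mp hσ, abs_zero]

lemma l1_zero {n : ℕ} : l1 (0 : Chain n X) = 0 := by simp [l1]

lemma l1_add_le {n : ℕ} (c d : Chain n X) : l1 (c + d) ≤ l1 c + l1 d := by
  classical
  rw [l1_eq_sum_of_subset (s := c.support ∪ d.support) Finsupp.support_add,
    l1_eq_sum_of_subset (s := c.support ∪ d.support) Finset.subset_union_left,
    l1_eq_sum_of_subset (s := c.support ∪ d.support) Finset.subset_union_right,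
    ← Finset.sum_add_distrib]
  refine Finset.sum_le_sum fun σ _ => ?_
  rw [Finsupp.add_apply]
  exact abs_add_le _ _

lemma l1_smul_le {n : ℕ} (a : ℝ) (c : Chain n X) : l1 (a • c) ≤ |a| * l1 c := by
  rw [l1_eq_sum_of_subset (s := c.support) Finsupp.support_smul, l1, Finset.mul_sum]
  refine le_of_eq (Finset.sum_congr rfl fun σ _ => ?_)
  rw [Finsupp.smul_apply, smul_eq_mul, abs_mul]

lemma l1_sum_le {n : ℕ} {ι : Type*} (s : Finset ι) (g : ι → Chain n X) :
    l1 (∑ i ∈ s, g i) ≤ ∑ i ∈ s, l1 (g i) := by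
  induction s using Finset.cons_induction with
  | empty => simp [l1_zero]
  | cons i s hi IH =>
    rw [Finset.sum_cons, Finset.sum_cons]
    exact (l1_add_le _ _).trans (add_le_add_right IH _)

lemma l1_single_le {n : ℕ} (σ : Sing n X) (a : ℝ) : l1 (Finsupp.single σ a) ≤ |a| := by
  rw [l1_eq_sum_of_subset Finsupp.support_single_subset, Finset.sum_singleton,
    Finsupp.single_eq_same]

lemma l1_symSimplex_le {n : ℕ} (σ : Sing n X) : l1 (symSimplex σ) ≤ 1 := by
  rw [symSimplex]
  refine (l1_smul_le _ _).trans ?_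
  have h1 : l1 (∑ π : Equiv.Perm (Fin (n + 1)),
      ((Equiv.Perm.sign π : ℤ) : ℝ) • Finsupp.single (σ.comp (affMap π)) (1 : ℝ)) ≤
      ((n + 1).factorial : ℝ) := by
    refine (l1_sum_le _ _).trans ?_
    have h2 : ∀ π : Equiv.Perm (Fin (n + 1)),
        l1 (((Equiv.Perm.sign π : ℤ) : ℝ) • Finsupp.single (σ.comp (affMap π)) (1 : ℝ)) ≤ 1 := by
      intro π
      refine (l1_smul_le _ _).trans ?_
      have habs : |((Equiv.Perm.sign π : ℤ) : ℝ)| = 1 := by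
        rcases Int.units_eq_one_or (Equiv.Perm.sign π) with h | h <;> rw [h] <;> norm_num
      rw [habs, one_mul]
      exact (l1_single_le _ _).trans (by norm_num)
    refine (Finset.sum_le_sum fun π _ => h2 π).trans ?_
    rw [Finset.sum_const, Finset.card_univ, Fintype.card_perm, Fintype.card_fin,
      nsmul_eq_mul, mul_one]
  have h3 : |(((n + 1).factorial : ℝ))⁻¹| = (((n + 1).factorial : ℝ))⁻¹ :=
    abs_of_nonneg (by positivity)
  rw [h3]
  calc (((n + 1).factorial : ℝ))⁻¹ * l1 (∑ π : Equiv.Perm (Fin (n + 1)),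
        ((Equiv.Perm.sign π : ℤ) : ℝ) • Finsupp.single (σ.comp (affMap π)) (1 : ℝ))
      ≤ (((n + 1).factorial : ℝ))⁻¹ * ((n + 1).factorial : ℝ) :=
        mul_le_mul_of_nonneg_left h1 (by positivity)
    _ = 1 := inv_mul_cancel₀ (Nat.cast_ne_zero.mpr (Nat.factorial_ne_zero _))

lemma l1_symCh_le {n : ℕ} (c : Chain n X) : l1 (symCh n c) ≤ l1 c := by
  have h1 : symCh n c = ∑ σ ∈ c.support, c σ • symSimplex σ := by
    rw [symCh, Finsupp.lsum_apply]
    rfl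
  rw [h1]
  refine (l1_sum_le _ _).trans ?_
  rw [l1]
  refine Finset.sum_le_sum fun σ _ => ?_
  refine (l1_smul_le _ _).trans ?_
  calc |c σ| * l1 (symSimplex σ) ≤ |c σ| * 1 :=
        mul_le_mul_of_nonneg_left (l1_symSimplex_le σ) (abs_nonneg _)
    _ = |c σ| := mul_one _

end L1Lemmas

/-- The ℓ¹-semi-norm of a homology class equals the normalised ℓ¹-semi-norm:
the infimum of ℓ¹-norms over cycles in a given homology class equals the infimum
over normalised cycles in that class. -/
theorem l1_seminorm_eq_normalised (X : Type) [TopologicalSpace X] (n : ℕ)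
    (z : Chain n X) (hz : z ∈ cyc X n) :
    sInf {r : ℝ | ∃ c ∈ cyc X n, c - z ∈ bdries X n ∧ l1 c = r} =
      sInf {r : ℝ | ∃ c ∈ cyc X n, IsNormalised c ∧ c - z ∈ bdries X n ∧ l1 c = r} := by
  cases n with
  | zero =>
    have hsets : {r : ℝ | ∃ c ∈ cyc X 0, c - z ∈ bdries X 0 ∧ l1 c = r} =
        {r : ℝ | ∃ c ∈ cyc X 0, IsNormalised c ∧ c - z ∈ bdries X 0 ∧ l1 c = r} := by
      ext r
      constructor
      · rintro ⟨c, h1, h2, h3⟩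
        exact ⟨c, h1, trivial, h2, h3⟩
      · rintro ⟨c, h1, -, h2, h3⟩
        exact ⟨c, h1, h2, h3⟩
    rw [hsets]
  | succ m =>
    have key : ∀ c : Chain (m + 1) X, c ∈ cyc X (m + 1) → c - z ∈ bdries X (m + 1) →
        symCh (m + 1) c ∈ cyc X (m + 1) ∧ IsNormalised (symCh (m + 1) c) ∧
          symCh (m + 1) c - z ∈ bdries X (m + 1) ∧ l1 (symCh (m + 1) c) ≤ l1 c := by
      intro c hc hcz
      have hcc : bdry m c = 0 := LinearMap.mem_ker.mp hc
      have hface : ∀ j : Fin (m + 2), face j (symCh (m + 1) c) = 0 := by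
        intro j
        rw [face_symCh, hcc, map_zero, smul_zero]
      refine ⟨?_, ?_, ?_, l1_symCh_le c⟩
      · show symCh (m + 1) c ∈ LinearMap.ker (bdry m)
        rw [LinearMap.mem_ker]
        have h4 : bdry m (symCh (m + 1) c) =
            ∑ j : Fin (m + 2), ((-1 : ℝ) ^ (j : ℕ)) • face j (symCh (m + 1) c) := by
          simp [bdry, LinearMap.sum_apply]
        rw [h4]
        simp [hface]
      · intro j _
        exact hface j
      · have h1 : symCh (m + 1) c - c = bdry (m + 1) (hCh (m + 1) c) + hCh m (bdry m c) :=
          symCh_homotopy c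
        rw [hcc, map_zero, add_zero] at h1
        have h2 : symCh (m + 1) c - z = (symCh (m + 1) c - c) + (c - z) := by abel
        rw [h2, h1]
        exact Submodule.add_mem _ ⟨hCh (m + 1) c, rfl⟩ hcz
    have hzz : z - z ∈ bdries X (m + 1) := by
      rw [sub_self]
      exact Submodule.zero_mem _
    apply le_antisymm
    · refine csInf_le_csInf ?_ ?_ ?_
      · exact ⟨0, by rintro r ⟨c, -, -, rfl⟩; exact l1_nonneg c⟩
      · obtain ⟨h1, h2, h3, -⟩ := key z hz hzz
        exact ⟨l1 (symCh (m + 1) z), symCh (m + 1) z, h1, h2, h3, rfl⟩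
      · rintro r ⟨c, h1, -, h2, h3⟩
        exact ⟨c, h1, h2, h3⟩
    · have hBbdd : BddBelow {r : ℝ | ∃ c ∈ cyc X (m + 1), IsNormalised c ∧
          c - z ∈ bdries X (m + 1) ∧ l1 c = r} :=
        ⟨0, by rintro r ⟨c, -, -, -, rfl⟩; exact l1_nonneg c⟩
      refine le_csInf ⟨l1 z, z, hz, hzz, rfl⟩ ?_
      rintro r ⟨c, h1, h2, rfl⟩
      obtain ⟨g1, g2, g3, g4⟩ := key c h1 h2
      have hmem : l1 (symCh (m + 1) c) ∈ {r : ℝ | ∃ c ∈ cyc X (m + 1), IsNormalised c ∧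
          c - z ∈ bdries X (m + 1) ∧ l1 c = r} := ⟨symCh (m + 1) c, g1, g2, g3, rfl⟩
      exact (csInf_le hBbdd hmem).trans g4
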